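/- (Kruskal's theorem.) For a real matrix M with r rows, define the Kruskal rank rank_K M as the largest integer I such that every set of I rows of M is linearly independent. For v ∈ ℝ^r and matrices M_1 (r×κ_1), M_2 (r×κ_2), M_3 (r×κ_3), define the tensor [v; M_1, M_2, M_3] ∈ ℝ^{κ_1×κ_2×κ_3} by entries [v; M_1, M_2, M_3]_{s,t,u} = Σ_{i=1}^r v_i M_1(i,s) M_2(i,t) M_3(i,u). Suppose v, v′ ∈ ℝ^r have all entries strictly positive, the matrices M_j and M′_j are row-stochastic (nonnegative entries, each row summing to 1), and both triples satisfy the Kruskal condition rank_K M_1 + rank_K M_2 + rank_K M_3 ≥ 2r + 2 and rank_K M′_1 + rank_K M′_2 + rank_K M′_3 ≥ 2r + 2. If [v; M_1, M_2, M_3] = [v′; M′_1, M′_2, M′_3], then there is a permutation σ of {1,…,r} such that v′_i = v_{σ(i)} and M′_j(i, ·) = M_j(σ(i), ·) for all i and j = 1, 2, 3. -/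

import Mathlib

set_option linter.unusedSectionVars false
set_option maxHeartbeats 1600000

open Finset

/-- The Kruskal rank of a matrix `M` with rows `M i : Fin κ → ℝ`: the largest `I` such
that every set of `I` rows of `M` is linearly independent. -/
noncomputable def kruskalRank {r κ : ℕ} (M : Fin r → Fin κ → ℝ) : ℕ :=
  sSup {I | I ≤ r ∧ ∀ S : Finset (Fin r), S.card = I →
    LinearIndependent ℝ (fun i : {i // i ∈ S} => M i.1)}

namespace KruskalAux

open scoped Classical
open RealInnerProductSpace




variable {V : Type*} [AddCommGroup V] [Module ℝ V]

theorem avoid_subspaces {ι : Type*} (s : Finset ι) (X : Submodule ℝ V)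
    (Y : ι → Submodule ℝ V) (h : ∀ i ∈ s, ¬ X ≤ Y i) :
    ∃ x ∈ X, ∀ i ∈ s, x ∉ Y i := by
  classical
  induction s using Finset.induction with
  | empty => exact ⟨0, X.zero_mem, by simp⟩
  | @insert a s ha ih =>
    obtain ⟨x, hxX, hx⟩ := ih (fun i hi => h i (mem_insert_of_mem hi))
    obtain ⟨y, hyX, hya⟩ : ∃ y ∈ X, y ∉ Y a := by
      by_contra hc
      push_neg at hc
      exact h a (mem_insert_self a s) hc
    have pair : ∀ i, x ∉ Y i → {t : ℝ | t ≠ 0 ∧ x + t • y ∈ Y i}.Subsingleton := by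
      intro i hxi t₁ h₁ t₂ h₂
      by_contra hne
      have hy : y ∈ Y i := by
        have hsub : (t₁ - t₂) • y ∈ Y i := by
          have := (Y i).sub_mem h₁.2 h₂.2
          simpa [add_sub_add_left_eq_sub, sub_smul] using this
        have := (Y i).smul_mem (t₁ - t₂)⁻¹ hsub
        rwa [smul_smul, inv_mul_cancel₀ (sub_ne_zero.mpr hne), one_smul] at this
      exact hxi (by simpa using (Y i).sub_mem h₁.2 ((Y i).smul_mem t₁ hy))
    have hbad : ∀ i ∈ insert a s, {t : ℝ | t ≠ 0 ∧ x + t • y ∈ Y i}.Subsingleton := by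
      intro i hi
      rcases mem_insert.mp hi with rfl | hi'
      · by_cases hxa : x ∈ Y i
        · intro t₁ h₁ t₂ h₂
          exfalso
          have : t₁ • y ∈ Y i := by simpa using (Y i).sub_mem h₁.2 hxa
          have := (Y i).smul_mem t₁⁻¹ this
          rw [smul_smul, inv_mul_cancel₀ h₁.1, one_smul] at this
          exact hya this
        · exact pair i hxa
      · exact pair i (hx i hi')
    have hfin : ({0} ∪ ⋃ i ∈ (insert a s : Finset ι), {t : ℝ | t ≠ 0 ∧ x + t • y ∈ Y i}).Finite := by
      refine (Set.finite_singleton 0).union (Set.Finite.biUnion (insert a s).finite_toSet ?_)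
      exact fun i hi => Set.Subsingleton.finite (hbad i hi)
    obtain ⟨t, ht⟩ := hfin.infinite_compl.nonempty
    simp only [Set.mem_compl_iff, Set.mem_union, Set.mem_singleton_iff, Set.mem_iUnion,
      not_or, not_exists] at ht
    obtain ⟨ht0, hts⟩ := ht
    refine ⟨x + t • y, X.add_mem hxX (X.smul_mem t hyX), ?_⟩
    intro i hi hmem
    exact hts i hi ⟨ht0, hmem⟩


variable {E : Type*} [NormedAddCommGroup E] [InnerProductSpace ℝ E] [FiniteDimensional ℝ E]

theorem exists_generic_orthogonal {ι : Type*} (s : Finset ι) (W : Submodule ℝ E) (v : ι → E) :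
    ∃ x, (∀ w ∈ W, ⟪w, x⟫ = 0) ∧ ∀ i ∈ s, v i ∉ W → ⟪v i, x⟫ ≠ 0 := by
  classical
  have hprop : ∀ i ∈ s.filter (fun i => v i ∉ W), ¬ Wᗮ ≤ (ℝ ∙ v i)ᗮ := by
    intro i hi hle
    have hW : (ℝ ∙ v i) ≤ W := by
      calc (ℝ ∙ v i) ≤ (ℝ ∙ v i)ᗮᗮ := Submodule.le_orthogonal_orthogonal _
        _ ≤ Wᗮᗮ := Submodule.orthogonal_le hle
        _ = W := Submodule.orthogonal_orthogonal W
    exact (mem_filter.1 hi).2 (hW (Submodule.mem_span_singleton_self _))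
  obtain ⟨x, hxX, hx⟩ := avoid_subspaces (s.filter (fun i => v i ∉ W)) Wᗮ
      (fun i => (ℝ ∙ v i)ᗮ) hprop
  refine ⟨x, fun w hw => (Submodule.mem_orthogonal W x).1 hxX w hw, ?_⟩
  intro i hi hvi hzero
  apply hx i (mem_filter.2 ⟨hi, hvi⟩)
  rw [Submodule.mem_orthogonal]
  intro u hu
  obtain ⟨t, rfl⟩ := Submodule.mem_span_singleton.1 hu
  rw [real_inner_smul_left, hzero, mul_zero]



variable {K : Type*} [Field K] {V : Type*} [AddCommGroup V] [Module K V]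

theorem indep_mono {ι : Type*} {v : ι → V} {S T : Finset ι} (hST : S ⊆ T)
    (h : LinearIndependent K (fun i : {i // i ∈ T} => v i.1)) :
    LinearIndependent K (fun i : {i // i ∈ S} => v i.1) := by
  have hinj : Function.Injective (fun i : {i // i ∈ S} => (⟨i.1, hST i.2⟩ : {i // i ∈ T})) := by
    intro a b hab
    have : a.1 = b.1 := by simpa using hab
    exact Subtype.ext this
  exact h.comp _ hinj

theorem range_subtype_family {ι : Type*} (v : ι → V) (S : Finset ι) :
    Set.range (fun i : {i // i ∈ S} => v i.1) = v '' ↑S := by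
  rw [show (fun i : {i // i ∈ S} => v i.1) = v ∘ (Subtype.val) from rfl, Set.range_comp,
    Subtype.range_coe_subtype, Finset.setOf_mem]

theorem finrank_span_finset_card {ι : Type*} {v : ι → V} {S : Finset ι}
    (h : LinearIndependent K (fun i : {i // i ∈ S} => v i.1)) :
    Module.finrank K (Submodule.span K (v '' ↑S)) = S.card := by
  classical
  have := finrank_span_eq_card h
  rwa [range_subtype_family, Fintype.card_coe] at this

theorem card_le_finrank_of_indep {ι : Type*} [FiniteDimensional K V] {v : ι → V} {S : Finset ι}
    {W : Submodule K V} (h : LinearIndependent K (fun i : {i // i ∈ S} => v i.1))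
    (hW : ∀ i ∈ S, v i ∈ W) : S.card ≤ Module.finrank K W := by
  rw [← finrank_span_finset_card h]
  apply Submodule.finrank_mono
  rw [Submodule.span_le]
  rintro _ ⟨i, hi, rfl⟩
  exact hW i (by simpa using hi)

theorem exists_dual_of_indep {ι : Type*} [DecidableEq ι] {v : ι → V} {T : Finset ι}
    (h : LinearIndependent K (fun i : {i // i ∈ T} => v i.1)) {i₀ : ι} (h₀ : i₀ ∈ T) :
    ∃ f : V →ₗ[K] K, ∀ i ∈ T, f (v i) = if i = i₀ then 1 else 0 := by
  classical
  have hset : LinearIndepOn K id (v '' ↑T : Set V) :=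
    LinearIndepOn.id_image (s := (↑T : Set ι)) h
  set B := Module.Basis.extend hset with hB
  have hsub : (v '' ↑T : Set V) ⊆ hset.extend (Set.subset_univ _) := hset.subset_extend _
  have hmem : ∀ i ∈ T, v i ∈ hset.extend (Set.subset_univ _) := fun i hi =>
    hsub (Set.mem_image_of_mem v (by simpa using hi))
  refine ⟨B.coord ⟨v i₀, hmem i₀ h₀⟩, fun i hi => ?_⟩
  have hBi : v i = B ⟨v i, hmem i hi⟩ := by rw [Module.Basis.extend_apply_self]
  rw [hBi, Module.Basis.coord_apply, Module.Basis.repr_self, Finsupp.single_apply]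
  have hinj : ∀ j ∈ T, ∀ j' ∈ T, v j = v j' → j = j' := by
    intro j hj j' hj' hvv
    have := h.injective (a₁ := ⟨j, hj⟩) (a₂ := ⟨j', hj'⟩) hvv
    simpa [Subtype.mk.injEq] using this
  by_cases hii : i = i₀
  · subst hii; simp
  · rw [if_neg hii, if_neg]
    intro hcon
    exact hii (hinj i hi i₀ h₀ (by simpa [Subtype.ext_iff] using hcon))




theorem kruskalRank_mem {r κ : ℕ} (M : Fin r → Fin κ → ℝ) :
    kruskalRank M ≤ r ∧ ∀ S : Finset (Fin r), S.card = kruskalRank M →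
      LinearIndependent ℝ (fun i : {i // i ∈ S} => M i.1) := by
  have h0 : 0 ∈ {I | I ≤ r ∧ ∀ S : Finset (Fin r), S.card = I →
      LinearIndependent ℝ (fun i : {i // i ∈ S} => M i.1)} := by
    refine ⟨Nat.zero_le r, fun S hS => ?_⟩
    have hSe : S = ∅ := Finset.card_eq_zero.mp hS
    subst hSe
    have : IsEmpty {i // i ∈ (∅ : Finset (Fin r))} := by
      constructor; rintro ⟨i, hi⟩; simp at hi
    exact linearIndependent_empty_type
  have hbdd : BddAbove {I | I ≤ r ∧ ∀ S : Finset (Fin r), S.card = I →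
      LinearIndependent ℝ (fun i : {i // i ∈ S} => M i.1)} := ⟨r, fun I hI => hI.1⟩
  exact Nat.sSup_mem ⟨0, h0⟩ hbdd

theorem kruskalRank_le {r κ : ℕ} (M : Fin r → Fin κ → ℝ) : kruskalRank M ≤ r :=
  (kruskalRank_mem M).1

theorem kruskalRank_indep {r κ : ℕ} (M : Fin r → Fin κ → ℝ) {S : Finset (Fin r)}
    (h : S.card ≤ kruskalRank M) :
    LinearIndependent ℝ (fun i : {i // i ∈ S} => M i.1) := by
  obtain ⟨hle, hsp⟩ := kruskalRank_mem M
  obtain ⟨T, hST, -, hT⟩ := Finset.exists_subsuperset_card_eq (subset_univ S) h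
    (by simpa using hle)
  exact indep_mono hST (hsp T hT)


noncomputable def eqE (κ : ℕ) : (Fin κ → ℝ) ≃ₗ[ℝ] EuclideanSpace ℝ (Fin κ) :=
  (WithLp.linearEquiv 2 ℝ (Fin κ → ℝ)).symm

theorem inner_eqE {κ : ℕ} (u : Fin κ → ℝ) (x : EuclideanSpace ℝ (Fin κ)) :
    ⟪eqE κ u, x⟫ = ∑ t, u t * ((eqE κ).symm x) t := by
  rw [PiLp.inner_apply]
  congr 1
  funext t
  simp [eqE, mul_comm]

theorem indep_E {κ : ℕ} {ι : Type*} {v : ι → Fin κ → ℝ} {S : Finset ι}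
    (h : LinearIndependent ℝ (fun i : {i // i ∈ S} => v i.1)) :
    LinearIndependent ℝ (fun i : {i // i ∈ S} => eqE κ (v i.1)) := by
  have := h.map' (eqE κ).toLinearMap (LinearEquiv.ker _)
  exact this

theorem smul_eqE {κ : ℕ} (γ : ℝ) (u : Fin κ → ℝ) : γ • eqE κ u = eqE κ (γ • u) :=
  (map_smul (eqE κ) γ u).symm


/-- dot-product functional -/
def dotL {n : ℕ} (u : Fin n → ℝ) : (Fin n → ℝ) →ₗ[ℝ] ℝ where
  toFun y := ∑ t, u t * y t
  map_add' y z := by simp [mul_add, Finset.sum_add_distrib]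
  map_smul' c y := by simp [Finset.mul_sum, mul_left_comm]

theorem dotL_apply {n : ℕ} (u y : Fin n → ℝ) : dotL u y = ∑ t, u t * y t := rfl

theorem dotL_single {n : ℕ} (u : Fin n → ℝ) (f : (Fin n → ℝ) →ₗ[ℝ] ℝ) :
    dotL u (fun t => f (Pi.single t 1)) = f u := by
  rw [dotL_apply]
  have hu : u = ∑ t, Pi.single t (u t) := by rw [Finset.univ_sum_single]
  conv_rhs => rw [hu]
  rw [map_sum]
  congr 1
  funext t
  have : Pi.single t (u t) = u t • (Pi.single t 1 : Fin n → ℝ) := by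
    rw [← Pi.single_smul, smul_eq_mul, mul_one]
  rw [this, map_smul, smul_eq_mul]

variable {r κ₁ κ₂ : ℕ}

theorem key_card_le
    (a a' : Fin r → Fin κ₁ → ℝ) (b b' : Fin r → Fin κ₂ → ℝ) (lam lam' : Fin r → ℝ)
    (k₁ k₂ k₃ : ℕ) (hk₁r : k₁ ≤ r) (hk₂r : k₂ ≤ r)
    (hsum : 2 * r + 2 ≤ k₁ + k₂ + k₃)
    (HA : ∀ S : Finset (Fin r), S.card ≤ k₁ →
      LinearIndependent ℝ (fun i : {i // i ∈ S} => a i.1))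
    (HB : ∀ S : Finset (Fin r), S.card ≤ k₂ →
      LinearIndependent ℝ (fun i : {i // i ∈ S} => b i.1))
    (Heq : ∀ s t, ∑ i, lam i * a i s * b i t = ∑ i, lam' i * a' i s * b' i t)
    (hS' : (univ.filter (fun i => lam' i ≠ 0)).card + k₃ ≤ r + 1) :
    (univ.filter (fun i => lam i ≠ 0)).card ≤ (univ.filter (fun i => lam' i ≠ 0)).card := by
  classical
  set S := univ.filter (fun i => lam i ≠ 0) with hSdef
  set S' := univ.filter (fun i => lam' i ≠ 0) with hS'def
  by_contra hcon
  push_neg at hcon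
  set m := S.card with hm
  set m' := S'.card with hm'
  have hmr : m ≤ r := by
    calc m ≤ (univ : Finset (Fin r)).card := card_le_card (filter_subset _ _)
    _ = r := by simp
  have hm'k₁ : m' < k₁ := by omega
  have hm'k₂ : m' < k₂ := by omega
  set p := min k₁ m with hp
  set q := min k₂ m with hq
  obtain ⟨TA, hTAS, hTA⟩ := Finset.exists_subset_card_eq (min_le_right k₁ m)
  obtain ⟨TB, hTBS, hTB⟩ := Finset.exists_subset_card_eq (min_le_right k₂ m)
  -- the two maps
  set Φ : (Fin κ₂ → ℝ) →ₗ[ℝ] ({i // i ∈ S} → ℝ) :=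
    LinearMap.pi (fun i => lam i.1 • dotL (b i.1)) with hΦ
  set ψ : ({i // i ∈ S} → ℝ) →ₗ[ℝ] (Fin κ₁ → ℝ) :=
    Fintype.linearCombination ℝ (fun i : {i // i ∈ S} => a i.1) with hψ
  set L := ψ.comp Φ with hL
  have hLy : ∀ y, L y = ∑ i ∈ S', (lam' i * dotL (b' i) y) • a' i := by
    intro y
    have h1 : L y = ∑ i : {i // i ∈ S}, (lam i.1 * dotL (b i.1) y) • a i.1 := by
      rw [hL, LinearMap.comp_apply, hψ, Fintype.linearCombination_apply]
      congr 1
    rw [h1]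
    rw [Finset.sum_coe_sort S (fun i => (lam i * dotL (b i) y) • a i)]
    rw [Finset.sum_subset (subset_univ S) (by
      intro i _ hiS
      have : lam i = 0 := by
        by_contra hne
        exact hiS (by simp [hSdef, hne])
      simp [this])]
    rw [Finset.sum_subset (subset_univ S') (by
      intro i _ hiS
      have : lam' i = 0 := by
        by_contra hne
        exact hiS (by simp [hS'def, hne])
      simp [this])]
    funext s
    simp only [Finset.sum_apply, Pi.smul_apply, smul_eq_mul, dotL_apply]
    have lhs : ∀ i, (lam i * ∑ t, b i t * y t) * a i s = ∑ t, (lam i * a i s * b i t) * y t := by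
      intro i
      rw [Finset.mul_sum, Finset.sum_mul]
      congr 1; funext t; ring
    have rhs : ∀ i, (lam' i * ∑ t, b' i t * y t) * a' i s
        = ∑ t, (lam' i * a' i s * b' i t) * y t := by
      intro i
      rw [Finset.mul_sum, Finset.sum_mul]
      congr 1; funext t; ring
    calc ∑ i, (lam i * ∑ t, b i t * y t) * a i s
        = ∑ i, ∑ t, (lam i * a i s * b i t) * y t := by
          exact Finset.sum_congr rfl (fun i _ => lhs i)
      _ = ∑ t, (∑ i, lam i * a i s * b i t) * y t := by
          rw [Finset.sum_comm]
          exact Finset.sum_congr rfl (fun t _ => (Finset.sum_mul _ _ _).symm)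
      _ = ∑ t, (∑ i, lam' i * a' i s * b' i t) * y t := by
          exact Finset.sum_congr rfl (fun t _ => by rw [Heq])
      _ = ∑ i, ∑ t, (lam' i * a' i s * b' i t) * y t := by
          rw [Finset.sum_comm]
          exact Finset.sum_congr rfl (fun t _ => (Finset.sum_mul _ _ _))
      _ = ∑ i, (lam' i * ∑ t, b' i t * y t) * a' i s := by
          exact Finset.sum_congr rfl (fun i _ => (rhs i).symm)
  -- (ii) range L inside span of a' over S'
  have hrange : LinearMap.range L ≤ Submodule.span ℝ (a' '' ↑S') := by
    rintro z ⟨y, rfl⟩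
    rw [hLy]
    apply Submodule.sum_mem
    intro i hi
    exact Submodule.smul_mem _ _ (Submodule.subset_span (Set.mem_image_of_mem _ (by simpa using hi)))
  have hrankL : Module.finrank ℝ (LinearMap.range L) ≤ m' := by
    calc Module.finrank ℝ (LinearMap.range L) ≤ Module.finrank ℝ (Submodule.span ℝ (a' '' ↑S')) :=
          Submodule.finrank_mono hrange
      _ ≤ (S'.image a').card := by
          rw [← Finset.coe_image]
          exact finrank_span_finset_le_card _
      _ ≤ m' := Finset.card_image_le
  -- (iii) rank-nullity for ψ
  have hψrange : p ≤ Module.finrank ℝ (LinearMap.range ψ) := by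
    have hspan : LinearMap.range ψ = Submodule.span ℝ (a '' ↑S) := by
      rw [hψ, Fintype.range_linearCombination]
      congr 1
      rw [show (fun i : {i // i ∈ S} => a i.1) = a ∘ (Subtype.val) from rfl, Set.range_comp,
        Subtype.range_coe_subtype, Finset.setOf_mem]
    have hTAind := HA TA (by rw [hTA]; exact min_le_left _ _)
    have h4 := finrank_span_finset_card hTAind
    calc p = TA.card := hTA.symm
      _ = Module.finrank ℝ (Submodule.span ℝ (a '' ↑TA)) := h4.symm
      _ ≤ Module.finrank ℝ (Submodule.span ℝ (a '' ↑S)) :=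
          Submodule.finrank_mono (Submodule.span_mono (Set.image_mono (by exact_mod_cast hTAS)))
      _ = Module.finrank ℝ (LinearMap.range ψ) := by rw [hspan]
  have hψrn : Module.finrank ℝ (LinearMap.range ψ) + Module.finrank ℝ (LinearMap.ker ψ) = m := by
    rw [LinearMap.finrank_range_add_finrank_ker ψ, Module.finrank_fintype_fun_eq_card,
      Fintype.card_coe]
  -- (iv) q ≤ rank Φ
  have hΦrank : q ≤ Module.finrank ℝ (LinearMap.range Φ) := by
    -- projection to TB coordinates
    set π : ({i // i ∈ S} → ℝ) →ₗ[ℝ] ({i // i ∈ TB} → ℝ) :=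
      LinearMap.pi (fun j => LinearMap.proj ⟨j.1, hTBS j.2⟩) with hπ
    have hsurj : ∀ j₀ : {i // i ∈ TB}, (Pi.single j₀ (1:ℝ)) ∈ LinearMap.range (π.comp Φ) := by
      intro j₀
      obtain ⟨f, hf⟩ := exists_dual_of_indep (HB TB (by rw [hTB]; exact min_le_left _ _)) j₀.2
      have hlam : lam j₀.1 ≠ 0 := by
        have : j₀.1 ∈ S := hTBS j₀.2
        simp [hSdef] at this
        exact this
      refine ⟨(lam j₀.1)⁻¹ • (fun t => f (Pi.single t 1)), ?_⟩
      funext j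
      simp only [LinearMap.comp_apply, hπ, hΦ, map_smul, LinearMap.pi_apply,
        LinearMap.proj_apply, Pi.smul_apply, LinearMap.smul_apply, smul_eq_mul]
      rw [dotL_single, hf j.1 j.2]
      by_cases hjj : j = j₀
      · subst hjj
        rw [if_pos rfl, Pi.single_eq_same]
        field_simp
      · have hne : j.1 ≠ j₀.1 := fun hc => hjj (Subtype.ext hc)
        rw [if_neg hne, Pi.single_eq_of_ne hjj]
        ring
    have hrangetop : LinearMap.range (π.comp Φ) = ⊤ := by
      rw [eq_top_iff]
      intro g _
      have hg : g = ∑ j₀, Pi.single j₀ (g j₀) := by rw [Finset.univ_sum_single]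
      rw [hg]
      apply Submodule.sum_mem
      intro j₀ _
      have : Pi.single j₀ (g j₀) = g j₀ • (Pi.single j₀ 1 : {i // i ∈ TB} → ℝ) := by
        rw [← Pi.single_smul, smul_eq_mul, mul_one]
      rw [this]
      exact Submodule.smul_mem _ _ (hsurj j₀)
    have h1 : Module.finrank ℝ (LinearMap.range (π.comp Φ)) = q := by
      rw [hrangetop]
      rw [finrank_top, Module.finrank_fintype_fun_eq_card, Fintype.card_coe, hTB]
    have h2 : Module.finrank ℝ (LinearMap.range (π.comp Φ))
        ≤ Module.finrank ℝ (LinearMap.range Φ) := by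
      rw [LinearMap.range_comp]
      exact Submodule.finrank_map_le _ _
    omega
  -- (v) Sylvester assembly
  have hsylv : Module.finrank ℝ (LinearMap.range Φ) ≤ m' + Module.finrank ℝ (LinearMap.ker ψ) := by
    set W := LinearMap.range Φ with hW
    have h1 : Module.finrank ℝ (Submodule.map ψ W) + Module.finrank ℝ (LinearMap.ker (ψ.domRestrict W))
        = Module.finrank ℝ W := by
      have := LinearMap.finrank_range_add_finrank_ker (ψ.domRestrict W)
      rwa [LinearMap.range_domRestrict] at this
    have h2 : Module.finrank ℝ (LinearMap.ker (ψ.domRestrict W)) ≤ Module.finrank ℝ (LinearMap.ker ψ) := by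
      rw [LinearMap.ker_domRestrict]
      rw [← Submodule.finrank_map_subtype_eq W (Submodule.comap W.subtype (LinearMap.ker ψ))]
      apply Submodule.finrank_mono
      rintro x ⟨y, hy, rfl⟩
      exact hy
    have h3 : Module.finrank ℝ (Submodule.map ψ W) ≤ m' := by
      have : Submodule.map ψ W = LinearMap.range L := by
        rw [hL, LinearMap.range_comp]
      rw [this]
      exact hrankL
    omega
  -- endgame numerics
  have hfin2 : min k₁ m + min k₂ m ≤ m + m' := by
    have hfinal : p + q ≤ m + m' := by omega
    simpa [hp, hq] using hfinal
  rcases le_total k₁ m with h1 | h1 <;> rcases le_total k₂ m with h2 | h2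
  · rw [min_eq_left h1, min_eq_left h2] at hfin2; omega
  · rw [min_eq_left h1, min_eq_right h2] at hfin2; omega
  · rw [min_eq_right h1, min_eq_left h2] at hfin2; omega
  · rw [min_eq_right h1, min_eq_right h2] at hfin2; omega


variable {V : Type*} [AddCommGroup V] [Module ℝ V] [FiniteDimensional ℝ V] {r : ℕ}

theorem core_matching (c c' : Fin r → V) (k : ℕ) (hk2 : 2 ≤ k) (hkr : k ≤ r)
    (H1 : ∀ S : Finset (Fin r), S.card ≤ k →
      LinearIndependent ℝ (fun i : {i // i ∈ S} => c i.1))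
    (H2 : ∀ S : Finset (Fin r), S.card ≤ k →
      LinearIndependent ℝ (fun i : {i // i ∈ S} => c' i.1))
    (HG : ∀ W : Submodule ℝ V, k ≤ (univ.filter (fun j => c' j ∈ W)).card + 1 →
      (univ.filter (fun j => c' j ∈ W)).card ≤ (univ.filter (fun i => c i ∈ W)).card) :
    ∃ σ : Equiv.Perm (Fin r), ∀ j, ∃ γ : ℝ, γ ≠ 0 ∧ c' j = γ • c (σ j) := by
  classical
  -- the key counting statement, proved by downward induction from t = k-1 to t = 1
  have QQ : ∀ mgap t, 1 ≤ t → t + mgap + 1 = k → ∀ R' : Finset (Fin r), R'.card = t →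
      (univ.filter (fun i => c i ∈ Submodule.span ℝ (c' '' ↑R'))).card = t := by
    intro mgap
    induction mgap with
    | zero =>
      intro t ht1 htk R' hR'
      set W := Submodule.span ℝ (c' '' ↑R') with hW
      have hdimW : Module.finrank ℝ W = t := by
        rw [hW, finrank_span_finset_card (H2 R' (by omega)), hR']
      have hn'_ge : t ≤ (univ.filter (fun j => c' j ∈ W)).card := by
        rw [← hR']
        apply card_le_card
        intro j hj
        simp only [mem_filter, mem_univ, true_and]
        exact Submodule.subset_span (Set.mem_image_of_mem _ (by simpa using hj))
      have hn_ge := HG W (by omega)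
      have hn_le : (univ.filter (fun i => c i ∈ W)).card ≤ t := by
        by_contra hlt
        push_neg at hlt
        obtain ⟨T, hTsub, hTcard⟩ := Finset.exists_subset_card_eq (Nat.succ_le_of_lt hlt)
        have hind := H1 T (by omega)
        have hc := card_le_finrank_of_indep hind (fun i hi => (mem_filter.1 (hTsub hi)).2)
        rw [hdimW] at hc
        omega
      omega
    | succ mgap ih =>
      intro t ht1 htk R' hR'
      have htk' : t + 1 ≤ k - 1 := by omega
      set W := Submodule.span ℝ (c' '' ↑R') with hWdef
      set Z := univ.filter (fun i => c i ∈ W) with hZdef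
      -- extensions
      have hAcard : ∀ j ∉ R', (univ.filter
          (fun i => c i ∈ Submodule.span ℝ (c' '' ↑(insert j R')))).card = t + 1 := by
        intro j hj
        exact ih (t+1) (by omega) (by omega) (insert j R') (by rw [card_insert_of_notMem hj, hR'])
      have hdimW : Module.finrank ℝ W = t := by
        rw [hWdef, finrank_span_finset_card (H2 R' (by omega)), hR']
      -- intersections of two extension spans equal W
      have hint : ∀ j₁ ∉ R', ∀ j₂ ∉ R', j₁ ≠ j₂ →
          Submodule.span ℝ (c' '' ↑(insert j₁ R')) ⊓ Submodule.span ℝ (c' '' ↑(insert j₂ R'))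
            = W := by
        intro j₁ hj₁ j₂ hj₂ hne
        set U₁ := Submodule.span ℝ (c' '' ↑(insert j₁ R')) with hU₁
        set U₂ := Submodule.span ℝ (c' '' ↑(insert j₂ R')) with hU₂
        have hd₁ : Module.finrank ℝ U₁ = t + 1 := by
          rw [hU₁, finrank_span_finset_card (H2 _ (by rw [card_insert_of_notMem hj₁, hR']; omega)),
            card_insert_of_notMem hj₁, hR']
        have hd₂ : Module.finrank ℝ U₂ = t + 1 := by
          rw [hU₂, finrank_span_finset_card (H2 _ (by rw [card_insert_of_notMem hj₂, hR']; omega)),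
            card_insert_of_notMem hj₂, hR']
        have hsup : U₁ ⊔ U₂ = Submodule.span ℝ (c' '' ↑(insert j₁ (insert j₂ R'))) := by
          have huset : (insert j₁ R') ∪ (insert j₂ R') = insert j₁ (insert j₂ R') := by
            ext x
            simp only [mem_union, mem_insert]
            tauto
          rw [hU₁, hU₂, ← Submodule.span_union, ← Set.image_union, ← Finset.coe_union, huset]
        have hcard12 : (insert j₁ (insert j₂ R')).card = t + 2 := by
          rw [card_insert_of_notMem (by simp [hne, hj₁]), card_insert_of_notMem hj₂, hR']
        have hdsup : Module.finrank ℝ (U₁ ⊔ U₂ : Submodule ℝ V) = t + 2 := by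
          rw [hsup, finrank_span_finset_card (H2 _ (by omega)), hcard12]
        have hdinf : Module.finrank ℝ (U₁ ⊓ U₂ : Submodule ℝ V) = t := by
          have := Submodule.finrank_sup_add_finrank_inf_eq U₁ U₂
          omega
        have hle : W ≤ U₁ ⊓ U₂ := by
          apply le_inf
          · rw [hWdef, hU₁]; exact Submodule.span_mono (Set.image_mono (by simp))
          · rw [hWdef, hU₂]; exact Submodule.span_mono (Set.image_mono (by simp))
        exact (Submodule.eq_of_le_of_finrank_le hle (by omega)).symm
      -- Z is contained in each A_j
      have hZA : ∀ j ∉ R', Z ⊆ univ.filter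
          (fun i => c i ∈ Submodule.span ℝ (c' '' ↑(insert j R'))) := by
        intro j hj i hi
        simp only [hZdef, mem_filter, mem_univ, true_and] at hi ⊢
        exact Submodule.span_mono (Set.image_mono (by simp)) hi
      -- Z.card ≤ t
      have hZle : Z.card ≤ t := by
        by_contra hlt
        push_neg at hlt
        obtain ⟨T, hTsub, hTcard⟩ := Finset.exists_subset_card_eq (Nat.succ_le_of_lt hlt)
        have hind := H1 T (by omega)
        have hc := card_le_finrank_of_indep hind (fun i hi => (mem_filter.1 (hTsub hi)).2)
        rw [hdimW] at hc
        omega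
      -- suppose Z.card < t, derive contradiction by counting
      by_contra hZne
      have hZlt : Z.card < t := lt_of_le_of_ne hZle hZne
      set z := Z.card with hz
      -- the union of (A_j \ Z) over j ∉ R'
      set E := (univ \ R') with hE
      have hEcard : E.card + t = r := by
        rw [hE, card_sdiff_of_subset (subset_univ R'), hR', card_univ, Fintype.card_fin]
        omega
      have hE2 : 2 ≤ E.card := by omega
      have hdisj : ∀ j₁ ∈ E, ∀ j₂ ∈ E, j₁ ≠ j₂ → Disjoint
          ((univ.filter (fun i => c i ∈ Submodule.span ℝ (c' '' ↑(insert j₁ R')))) \ Z)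
          ((univ.filter (fun i => c i ∈ Submodule.span ℝ (c' '' ↑(insert j₂ R')))) \ Z) := by
        intro j₁ hj₁ j₂ hj₂ hne
        rw [Finset.disjoint_left]
        intro i hi₁ hi₂
        have hj₁' : j₁ ∉ R' := by rw [hE] at hj₁; simpa using hj₁
        have hj₂' : j₂ ∉ R' := by rw [hE] at hj₂; simpa using hj₂
        have hiZ : i ∈ Z := by
          have h1 := (mem_filter.1 (mem_sdiff.1 hi₁).1).2
          have h2 := (mem_filter.1 (mem_sdiff.1 hi₂).1).2
          simp only [hZdef, mem_filter, mem_univ, true_and]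
          have : c i ∈ Submodule.span ℝ (c' '' ↑(insert j₁ R'))
              ⊓ Submodule.span ℝ (c' '' ↑(insert j₂ R')) := ⟨h1, h2⟩
          rw [hint j₁ hj₁' j₂ hj₂' hne] at this
          exact this
        exact (mem_sdiff.1 hi₁).2 hiZ
      set B := E.biUnion (fun j => (univ.filter
          (fun i => c i ∈ Submodule.span ℝ (c' '' ↑(insert j R')))) \ Z) with hB
      have hBcard : B.card = E.card * (t + 1 - z) := by
        rw [hB, card_biUnion hdisj]
        rw [Finset.sum_congr rfl (fun j hj => ?_), Finset.sum_const, smul_eq_mul]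
        have hj' : j ∉ R' := by rw [hE] at hj; simpa using hj
        rw [card_sdiff_of_subset (hZA j hj'), hAcard j hj']
      have hBZ : Disjoint B Z := by
        rw [Finset.disjoint_left]
        intro i hi hiZ
        rw [hB, mem_biUnion] at hi
        obtain ⟨j, hj, hij⟩ := hi
        exact (mem_sdiff.1 hij).2 hiZ
      have hle_r : B.card + z ≤ r := by
        have := card_union_of_disjoint hBZ
        have hsub : B ∪ Z ⊆ univ := subset_univ _
        have := card_le_card hsub
        rw [card_union_of_disjoint hBZ] at this
        simpa [card_univ] using this
      -- arithmetic contradiction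
      obtain ⟨d, hd1, hd2⟩ : ∃ d, z + d = t ∧ 1 ≤ d := ⟨t - z, by omega, by omega⟩
      have htz : t + 1 - z = d + 1 := by omega
      rw [hBcard, htz] at hle_r
      have : E.card * d + E.card + z ≤ r := by
        have : E.card * (d + 1) = E.card * d + E.card := by ring
        omega
      have hEd : E.card * d ≤ d := by omega
      have : E.card ≤ 1 := by
        have := Nat.le_of_mul_le_mul_right (by
          calc E.card * d ≤ d := hEd
            _ = 1 * d := (one_mul d).symm) (by omega : 0 < d)
        exact this
      omega
  -- apply at t = 1
  have Q1 : ∀ j, (univ.filter (fun i => c i ∈ Submodule.span ℝ (c' '' ↑({j} : Finset (Fin r))))).card = 1 := by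
    intro j
    exact QQ (k - 2) 1 le_rfl (by omega) {j} (card_singleton j)
  -- extract the map
  have hex : ∀ j, ∃ i, univ.filter
      (fun i => c i ∈ Submodule.span ℝ (c' '' ↑({j} : Finset (Fin r)))) = {i} :=
    fun j => Finset.card_eq_one.mp (Q1 j)
  choose ν hν using hex
  have hmemν : ∀ j, c (ν j) ∈ Submodule.span ℝ {c' j} := by
    intro j
    have : ν j ∈ univ.filter
        (fun i => c i ∈ Submodule.span ℝ (c' '' ↑({j} : Finset (Fin r)))) := by
      rw [hν j]; exact mem_singleton_self _
    have h2 := (mem_filter.1 this).2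
    simpa using h2
  have hcnz : ∀ i : Fin r, c i ≠ 0 := by
    intro i
    have hind := H1 {i} (by rw [card_singleton]; omega)
    exact hind.ne_zero ⟨i, mem_singleton_self i⟩
  have hprop : ∀ j, ∃ γ : ℝ, γ ≠ 0 ∧ c' j = γ • c (ν j) := by
    intro j
    obtain ⟨δ, hδ⟩ := Submodule.mem_span_singleton.1 (hmemν j)
    have hδnz : δ ≠ 0 := by
      intro h0
      apply hcnz (ν j)
      rw [← hδ, h0, zero_smul]
    refine ⟨δ⁻¹, inv_ne_zero hδnz, ?_⟩
    rw [← hδ, smul_smul, inv_mul_cancel₀ hδnz, one_smul]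
  -- ν is injective
  have hinj : Function.Injective ν := by
    intro j₁ j₂ hjj
    by_contra hne
    obtain ⟨γ₁, hγ₁, h₁⟩ := hprop j₁
    obtain ⟨γ₂, hγ₂, h₂⟩ := hprop j₂
    have hcard : ({j₁, j₂} : Finset (Fin r)).card = 2 := card_pair hne
    have hind := H2 {j₁, j₂} (by rw [hcard]; exact hk2)
    rw [Fintype.linearIndependent_iff] at hind
    set g' : Fin r → ℝ := fun x => if x = j₁ then γ₂ else -γ₁ with hg'
    have hsum : ∑ x : {x // x ∈ ({j₁, j₂} : Finset (Fin r))}, g' x.1 • c' x.1 = 0 := by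
      rw [Finset.sum_coe_sort ({j₁, j₂} : Finset (Fin r)) (fun x => g' x • c' x),
        Finset.sum_pair hne]
      have e1 : g' j₁ = γ₂ := by rw [hg']; simp
      have e2 : g' j₂ = -γ₁ := by rw [hg']; exact if_neg (fun h => hne h.symm)
      rw [e1, e2, h₁, h₂, hjj, smul_smul, smul_smul]
      rw [← add_smul]
      have : γ₂ * γ₁ + -γ₁ * γ₂ = 0 := by ring
      rw [this, zero_smul]
    have := hind (fun x => g' x.1) hsum ⟨j₁, by simp⟩
    rw [hg'] at this
    simp at this
    exact hγ₂ this
  have hbij : Function.Bijective ν := Finite.injective_iff_bijective.mp hinj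
  refine ⟨Equiv.ofBijective ν hbij, ?_⟩
  intro j
  exact hprop j



variable {r κ₁ κ₂ κ₃ : ℕ}

theorem contract3 (a a' : Fin r → Fin κ₁ → ℝ) (b b' : Fin r → Fin κ₂ → ℝ)
    (c c' : Fin r → Fin κ₃ → ℝ)
    (heq : ∀ s t u, ∑ i, a i s * b i t * c i u = ∑ i, a' i s * b' i t * c' i u)
    (y : Fin κ₃ → ℝ) (s : Fin κ₁) (t : Fin κ₂) :
    ∑ i, (∑ u, c i u * y u) * a i s * b i t
      = ∑ i, (∑ u, c' i u * y u) * a' i s * b' i t := by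
  have step : ∀ (aa : Fin r → Fin κ₁ → ℝ) (bb : Fin r → Fin κ₂ → ℝ)
      (cc : Fin r → Fin κ₃ → ℝ) (i : Fin r),
      (∑ u, cc i u * y u) * aa i s * bb i t = ∑ u, (aa i s * bb i t * cc i u) * y u := by
    intro aa bb cc i
    rw [Finset.sum_mul, Finset.sum_mul]
    exact Finset.sum_congr rfl (fun u _ => by ring)
  calc ∑ i, (∑ u, c i u * y u) * a i s * b i t
      = ∑ i, ∑ u, (a i s * b i t * c i u) * y u :=
        Finset.sum_congr rfl (fun i _ => step a b c i)
    _ = ∑ u, ∑ i, (a i s * b i t * c i u) * y u := Finset.sum_comm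
    _ = ∑ u, (∑ i, a i s * b i t * c i u) * y u :=
        Finset.sum_congr rfl (fun u _ => (Finset.sum_mul _ _ _).symm)
    _ = ∑ u, (∑ i, a' i s * b' i t * c' i u) * y u :=
        Finset.sum_congr rfl (fun u _ => by rw [heq])
    _ = ∑ u, ∑ i, (a' i s * b' i t * c' i u) * y u :=
        Finset.sum_congr rfl (fun u _ => Finset.sum_mul _ _ _)
    _ = ∑ i, ∑ u, (a' i s * b' i t * c' i u) * y u := Finset.sum_comm
    _ = ∑ i, (∑ u, c' i u * y u) * a' i s * b' i t :=
        Finset.sum_congr rfl (fun i _ => (step a' b' c' i).symm)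


variable {r κ₁ κ₂ κ₃ : ℕ}

theorem bridge_count
    (a a' : Fin r → Fin κ₁ → ℝ) (b b' : Fin r → Fin κ₂ → ℝ) (c c' : Fin r → Fin κ₃ → ℝ)
    (k₁ k₂ k₃ : ℕ) (hk₁r : k₁ ≤ r) (hk₂r : k₂ ≤ r)
    (hsum : 2 * r + 2 ≤ k₁ + k₂ + k₃)
    (HA : ∀ S : Finset (Fin r), S.card ≤ k₁ →
      LinearIndependent ℝ (fun i : {i // i ∈ S} => a i.1))
    (HB : ∀ S : Finset (Fin r), S.card ≤ k₂ →
      LinearIndependent ℝ (fun i : {i // i ∈ S} => b i.1))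
    (heq : ∀ s t u, ∑ i, a i s * b i t * c i u = ∑ i, a' i s * b' i t * c' i u)
    (W : Submodule ℝ (EuclideanSpace ℝ (Fin κ₃)))
    (hW : k₃ ≤ (univ.filter (fun j => eqE κ₃ (c' j) ∈ W)).card + 1) :
    (univ.filter (fun j => eqE κ₃ (c' j) ∈ W)).card
      ≤ (univ.filter (fun i => eqE κ₃ (c i) ∈ W)).card := by
  obtain ⟨x, hx0, hxn⟩ := exists_generic_orthogonal (univ : Finset (Fin r ⊕ Fin r)) W
    (Sum.elim (fun i => eqE κ₃ (c i)) (fun j => eqE κ₃ (c' j)))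
  set y := (eqE κ₃).symm x with hy
  set lam : Fin r → ℝ := fun i => ∑ u, c i u * y u with hlam
  set lam' : Fin r → ℝ := fun j => ∑ u, c' j u * y u with hlam'
  have hlami : ∀ i, lam i = ⟪eqE κ₃ (c i), x⟫ := fun i => (inner_eqE (c i) x).symm
  have hlami' : ∀ j, lam' j = ⟪eqE κ₃ (c' j), x⟫ := fun j => (inner_eqE (c' j) x).symm
  have hiff : ∀ i, lam i ≠ 0 ↔ eqE κ₃ (c i) ∉ W := by
    intro i
    constructor
    · intro hne hmem
      exact hne (by rw [hlami]; exact hx0 _ hmem)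
    · intro hnm
      rw [hlami]
      exact hxn (Sum.inl i) (mem_univ _) hnm
  have hiff' : ∀ j, lam' j ≠ 0 ↔ eqE κ₃ (c' j) ∉ W := by
    intro j
    constructor
    · intro hne hmem
      exact hne (by rw [hlami']; exact hx0 _ hmem)
    · intro hnm
      rw [hlami']
      exact hxn (Sum.inr j) (mem_univ _) hnm
  have hSeq : univ.filter (fun i => lam i ≠ 0) = univ.filter (fun i => eqE κ₃ (c i) ∉ W) :=
    filter_congr (fun i _ => by rw [hiff i])
  have hSeq' : univ.filter (fun j => lam' j ≠ 0) = univ.filter (fun j => eqE κ₃ (c' j) ∉ W) :=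
    filter_congr (fun j _ => by rw [hiff' j])
  have hcompl : (univ.filter (fun i => eqE κ₃ (c i) ∉ W)).card
      + (univ.filter (fun i => eqE κ₃ (c i) ∈ W)).card = r := by
    have h0 := Finset.card_filter_add_card_filter_not
      (s := (univ : Finset (Fin r))) (p := fun i => eqE κ₃ (c i) ∈ W)
    rw [card_univ, Fintype.card_fin] at h0
    omega
  have hcompl' : (univ.filter (fun j => eqE κ₃ (c' j) ∉ W)).card
      + (univ.filter (fun j => eqE κ₃ (c' j) ∈ W)).card = r := by
    have h0 := Finset.card_filter_add_card_filter_not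
      (s := (univ : Finset (Fin r))) (p := fun j => eqE κ₃ (c' j) ∈ W)
    rw [card_univ, Fintype.card_fin] at h0
    omega
  have hkey := key_card_le a a' b b' lam lam' k₁ k₂ k₃ hk₁r hk₂r hsum HA HB
    (fun s t => contract3 a a' b b' c c' heq y s t)
    (by rw [hSeq']; omega)
  rw [hSeq, hSeq'] at hkey
  omega

theorem matching_mode {r κ₁ κ₂ κ₃ : ℕ}
    (a a' : Fin r → Fin κ₁ → ℝ) (b b' : Fin r → Fin κ₂ → ℝ) (c c' : Fin r → Fin κ₃ → ℝ)
    (k₁ k₂ k₃ k₁' k₂' k₃' : ℕ)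
    (hk₁r : k₁ ≤ r) (hk₂r : k₂ ≤ r) (hk₁r' : k₁' ≤ r) (hk₂r' : k₂' ≤ r)
    (hk₃2 : 2 ≤ k₃) (hk₃r : k₃ ≤ r) (hk₃2' : 2 ≤ k₃') (hk₃r' : k₃' ≤ r)
    (hsum : 2 * r + 2 ≤ k₁ + k₂ + k₃) (hsum' : 2 * r + 2 ≤ k₁' + k₂' + k₃')
    (HA : ∀ S : Finset (Fin r), S.card ≤ k₁ →
      LinearIndependent ℝ (fun i : {i // i ∈ S} => a i.1))
    (HB : ∀ S : Finset (Fin r), S.card ≤ k₂ →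
      LinearIndependent ℝ (fun i : {i // i ∈ S} => b i.1))
    (HC : ∀ S : Finset (Fin r), S.card ≤ k₃ →
      LinearIndependent ℝ (fun i : {i // i ∈ S} => c i.1))
    (HA' : ∀ S : Finset (Fin r), S.card ≤ k₁' →
      LinearIndependent ℝ (fun i : {i // i ∈ S} => a' i.1))
    (HB' : ∀ S : Finset (Fin r), S.card ≤ k₂' →
      LinearIndependent ℝ (fun i : {i // i ∈ S} => b' i.1))
    (HC' : ∀ S : Finset (Fin r), S.card ≤ k₃' →
      LinearIndependent ℝ (fun i : {i // i ∈ S} => c' i.1))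
    (heq : ∀ s t u, ∑ i, a i s * b i t * c i u = ∑ i, a' i s * b' i t * c' i u) :
    ∃ σ : Equiv.Perm (Fin r), ∀ j, ∃ γ : ℝ, γ ≠ 0 ∧ c' j = γ • c (σ j) := by
  rcases le_total k₃ k₃' with hle | hle
  · obtain ⟨σ, hσ⟩ := core_matching (fun i => eqE κ₃ (c i)) (fun j => eqE κ₃ (c' j)) k₃
      hk₃2 hk₃r
      (fun S hS => indep_E (HC S hS))
      (fun S hS => indep_E (HC' S (hS.trans hle)))
      (fun W hW => bridge_count a a' b b' c c' k₁ k₂ k₃ hk₁r hk₂r hsum HA HB heq W hW)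
    refine ⟨σ, fun j => ?_⟩
    obtain ⟨γ, hγ, hj⟩ := hσ j
    refine ⟨γ, hγ, ?_⟩
    apply (eqE κ₃).injective
    rw [hj, ← smul_eqE]
  · obtain ⟨τ, hτ⟩ := core_matching (fun j => eqE κ₃ (c' j)) (fun i => eqE κ₃ (c i)) k₃'
      hk₃2' hk₃r'
      (fun S hS => indep_E (HC' S hS))
      (fun S hS => indep_E (HC S (hS.trans hle)))
      (fun W hW => bridge_count a' a b' b c' c k₁' k₂' k₃' hk₁r' hk₂r' hsum' HA' HB'
        (fun s t u => (heq s t u).symm) W hW)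
    refine ⟨τ.symm, fun j => ?_⟩
    obtain ⟨γ, hγ, hj⟩ := hτ (τ.symm j)
    rw [Equiv.apply_symm_apply] at hj
    refine ⟨γ⁻¹, inv_ne_zero hγ, ?_⟩
    apply (eqE κ₃).injective
    rw [← smul_eqE, hj, smul_smul, inv_mul_cancel₀ hγ, one_smul]

theorem contract2 {r κ₁ κ₂ : ℕ} (a a' : Fin r → Fin κ₁ → ℝ) (b b' : Fin r → Fin κ₂ → ℝ)
    (lam lam' : Fin r → ℝ)
    (Heq : ∀ s t, ∑ i, lam i * a i s * b i t = ∑ i, lam' i * a' i s * b' i t)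
    (y : Fin κ₂ → ℝ) :
    ∑ i, (lam i * dotL (b i) y) • a i = ∑ i, (lam' i * dotL (b' i) y) • a' i := by
  funext s
  simp only [Finset.sum_apply, Pi.smul_apply, smul_eq_mul, dotL_apply]
  have lhs : ∀ i, (lam i * ∑ t, b i t * y t) * a i s = ∑ t, (lam i * a i s * b i t) * y t := by
    intro i
    rw [Finset.mul_sum, Finset.sum_mul]
    congr 1; funext t; ring
  have rhs : ∀ i, (lam' i * ∑ t, b' i t * y t) * a' i s
      = ∑ t, (lam' i * a' i s * b' i t) * y t := by
    intro i
    rw [Finset.mul_sum, Finset.sum_mul]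
    congr 1; funext t; ring
  calc ∑ i, (lam i * ∑ t, b i t * y t) * a i s
      = ∑ i, ∑ t, (lam i * a i s * b i t) * y t := Finset.sum_congr rfl (fun i _ => lhs i)
    _ = ∑ t, (∑ i, lam i * a i s * b i t) * y t := by
        rw [Finset.sum_comm]
        exact Finset.sum_congr rfl (fun t _ => (Finset.sum_mul _ _ _).symm)
    _ = ∑ t, (∑ i, lam' i * a' i s * b' i t) * y t :=
        Finset.sum_congr rfl (fun t _ => by rw [Heq])
    _ = ∑ i, ∑ t, (lam' i * a' i s * b' i t) * y t := by
        rw [Finset.sum_comm]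
        exact Finset.sum_congr rfl (fun t _ => Finset.sum_mul _ _ _)
    _ = ∑ i, (lam' i * ∑ t, b' i t * y t) * a' i s :=
        Finset.sum_congr rfl (fun i _ => (rhs i).symm)

theorem perm_eq {r κ₁ κ₂ κ₃ : ℕ}
    (a a' : Fin r → Fin κ₁ → ℝ) (b b' : Fin r → Fin κ₂ → ℝ) (c c' : Fin r → Fin κ₃ → ℝ)
    (k₁ k₂ k₃ : ℕ) (hk₁r : k₁ ≤ r) (hk₂r : k₂ ≤ r) (hk₃r : k₃ ≤ r) (hk₃2 : 2 ≤ k₃)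
    (hsum : 2 * r + 2 ≤ k₁ + k₂ + k₃)
    (HA : ∀ S : Finset (Fin r), S.card ≤ k₁ →
      LinearIndependent ℝ (fun i : {i // i ∈ S} => a i.1))
    (HB : ∀ S : Finset (Fin r), S.card ≤ k₂ →
      LinearIndependent ℝ (fun i : {i // i ∈ S} => b i.1))
    (HC : ∀ S : Finset (Fin r), S.card ≤ k₃ →
      LinearIndependent ℝ (fun i : {i // i ∈ S} => c i.1))
    (heq : ∀ s t u, ∑ i, a i s * b i t * c i u = ∑ i, a' i s * b' i t * c' i u)
    (σa σc : Equiv.Perm (Fin r)) (al ga : Fin r → ℝ)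
    (hal : ∀ j, al j ≠ 0 ∧ a' j = al j • a (σa j))
    (hga : ∀ j, ga j ≠ 0 ∧ c' j = ga j • c (σc j)) :
    ∀ j₀, σa j₀ = σc j₀ := by
  intro j₀
  by_contra hne
  set i₀ := σc j₀ with hi₀def
  set i₁ := σa j₀ with hi₁def
  have hne' : i₁ ≠ i₀ := fun h => hne (by rw [hi₀def, hi₁def] at h; exact h)
  -- choose V
  have h1V : ({i₁} : Finset (Fin r)) ⊆ univ.erase i₀ := by
    rw [singleton_subset_iff, mem_erase]
    exact ⟨hne', mem_univ _⟩
  have hcard_er : k₃ - 1 ≤ (univ.erase i₀).card := by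
    rw [card_erase_of_mem (mem_univ _), card_univ, Fintype.card_fin]
    omega
  obtain ⟨V, hV1, hVsub, hVcard⟩ := Finset.exists_subsuperset_card_eq (n := k₃ - 1) h1V
    (by rw [card_singleton]; omega) hcard_er
  have hi₀V : i₀ ∉ V := fun h => by
    have := hVsub h
    rw [mem_erase] at this
    exact this.1 rfl
  have hi₁V : i₁ ∈ V := hV1 (mem_singleton_self _)
  set W := Submodule.span ℝ ((fun i => eqE κ₃ (c i)) '' ↑V) with hWdef
  obtain ⟨x, hx0, hxn⟩ := exists_generic_orthogonal (univ : Finset (Fin r)) W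
    (fun i => eqE κ₃ (c i))
  set y := (eqE κ₃).symm x with hy
  set lam : Fin r → ℝ := fun i => ∑ u, c i u * y u with hlam
  set lam' : Fin r → ℝ := fun j => ∑ u, c' j u * y u with hlam'
  have hlami : ∀ i, lam i = ⟪eqE κ₃ (c i), x⟫ := fun i => (inner_eqE (c i) x).symm
  have hiff : ∀ i, lam i ≠ 0 ↔ eqE κ₃ (c i) ∉ W := by
    intro i
    constructor
    · intro hnz hmem
      exact hnz (by rw [hlami]; exact hx0 _ hmem)
    · intro hnm
      rw [hlami]
      exact hxn i (mem_univ _) hnm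
  set S := univ.filter (fun i => lam i ≠ 0) with hSdef
  -- size of S
  have hcompl : S.card + (univ.filter (fun i => eqE κ₃ (c i) ∈ W)).card = r := by
    have h0 := Finset.card_filter_add_card_filter_not
      (s := (univ : Finset (Fin r))) (p := fun i => eqE κ₃ (c i) ∈ W)
    rw [card_univ, Fintype.card_fin] at h0
    have : S = univ.filter (fun i => ¬ (eqE κ₃ (c i) ∈ W)) :=
      filter_congr (fun i _ => by rw [hiff i])
    rw [this]
    omega
  have hVin : V ⊆ univ.filter (fun i => eqE κ₃ (c i) ∈ W) := by
    intro i hi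
    rw [mem_filter]
    exact ⟨mem_univ _, Submodule.subset_span (Set.mem_image_of_mem _ (by simpa using hi))⟩
  have hScard : S.card + k₃ ≤ r + 1 := by
    have := card_le_card hVin
    omega
  have hSk₁ : S.card + 1 ≤ k₁ := by omega
  have hSk₂ : S.card ≤ k₂ := by omega
  -- i₀ ∈ S
  have hi₀S : i₀ ∈ S := by
    rw [hSdef, mem_filter]
    refine ⟨mem_univ _, (hiff i₀).2 ?_⟩
    intro hmem
    have hWrank : Module.finrank ℝ W ≤ k₃ - 1 := by
      rw [hWdef]
      calc Module.finrank ℝ (Submodule.span ℝ ((fun i => eqE κ₃ (c i)) '' ↑V))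
          ≤ (V.image (fun i => eqE κ₃ (c i))).card := by
            rw [← Finset.coe_image]
            exact finrank_span_finset_le_card _
        _ ≤ V.card := Finset.card_image_le
        _ = k₃ - 1 := hVcard
    have hTcard : (insert i₀ V).card = k₃ := by
      rw [card_insert_of_notMem hi₀V, hVcard]
      omega
    have hTind := indep_E (v := c) (HC (insert i₀ V) (by omega))
    have hinW : ∀ i ∈ insert i₀ V, eqE κ₃ (c i) ∈ W := by
      intro i hi
      rcases mem_insert.1 hi with rfl | hiV
      · exact hmem
      · exact Submodule.subset_span (Set.mem_image_of_mem _ (by simpa using hiV))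
    have hck := card_le_finrank_of_indep (W := W) hTind hinW
    rw [hTcard] at hck
    omega
  have hi₁S : i₁ ∉ S := by
    rw [hSdef, mem_filter]
    rintro ⟨-, hnz⟩
    exact (hiff i₁).1 hnz (Submodule.subset_span (Set.mem_image_of_mem _ (by simpa using hi₁V)))
  -- lam' in terms of lam
  have hlameq : ∀ j, lam' j = ga j * lam (σc j) := by
    intro j
    rw [hlam', hlam]
    have hcj : ∀ u, c' j u = ga j * c (σc j) u := by
      intro u
      have := (hga j).2
      rw [this]
      simp
    rw [Finset.mul_sum]
    exact Finset.sum_congr rfl (fun u _ => by rw [hcj u]; ring)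
  set S' := univ.filter (fun j => lam' j ≠ 0) with hS'def
  have hS'mem : ∀ j, j ∈ S' ↔ σc j ∈ S := by
    intro j
    rw [hS'def, hSdef, mem_filter, mem_filter]
    constructor
    · rintro ⟨-, hnz⟩
      refine ⟨mem_univ _, ?_⟩
      rw [hlameq] at hnz
      exact fun h0 => hnz (by rw [h0, mul_zero])
    · rintro ⟨-, hnz⟩
      exact ⟨mem_univ _, by rw [hlameq]; exact mul_ne_zero (hga j).1 hnz⟩
  have hS'img : S' = S.image σc.symm := by
    ext j
    rw [hS'mem, Finset.mem_image]
    constructor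
    · intro h
      exact ⟨σc j, h, by simp⟩
    · rintro ⟨i, hi, rfl⟩
      simpa using hi
  have hS'card : S'.card = S.card := by
    rw [hS'img]
    exact Finset.card_image_of_injective _ σc.symm.injective
  -- the span inclusion
  have haimem : ∀ i' ∈ S, a i' ∈ Submodule.span ℝ (a' '' ↑S') := by
    intro i' hi'
    obtain ⟨f, hf⟩ := exists_dual_of_indep (HB S hSk₂) hi'
    set y₂ : Fin κ₂ → ℝ := fun t => f (Pi.single t 1) with hy₂
    have hident := contract2 a a' b b' lam lam'
      (fun s t => contract3 a a' b b' c c' heq y s t) y₂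
    have hLHS : ∑ i, (lam i * dotL (b i) y₂) • a i = lam i' • a i' := by
      rw [← Finset.sum_subset (subset_univ S) (fun i _ hiS => by
        have : lam i = 0 := by
          by_contra hnz
          exact hiS (by rw [hSdef, mem_filter]; exact ⟨mem_univ _, hnz⟩)
        rw [this, zero_mul, zero_smul])]
      rw [Finset.sum_eq_single_of_mem i' hi' (fun i hiS hne => by
        rw [hy₂, dotL_single, hf i hiS, if_neg hne, mul_zero, zero_smul])]
      rw [hy₂, dotL_single, hf i' hi', if_pos rfl, mul_one]
    have hRHS : ∑ i, (lam' i * dotL (b' i) y₂) • a' i ∈ Submodule.span ℝ (a' '' ↑S') := by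
      rw [← Finset.sum_subset (subset_univ S') (fun j _ hjS => by
        have : lam' j = 0 := by
          by_contra hnz
          exact hjS (by rw [hS'def, mem_filter]; exact ⟨mem_univ _, hnz⟩)
        rw [this, zero_mul, zero_smul])]
      apply Submodule.sum_mem
      intro j hj
      exact Submodule.smul_mem _ _
        (Submodule.subset_span (Set.mem_image_of_mem _ (by simpa using hj)))
    have hlamnz : lam i' ≠ 0 := by
      rw [hSdef, mem_filter] at hi'
      exact hi'.2
    have : a i' = (lam i')⁻¹ • (lam i' • a i') := by
      rw [smul_smul, inv_mul_cancel₀ hlamnz, one_smul]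
    rw [this, ← hLHS, hident]
    exact Submodule.smul_mem _ _ hRHS
  set T₂ := S'.image σa with hT₂def
  have hT₂card : T₂.card = S.card := by
    rw [hT₂def, Finset.card_image_of_injective _ σa.injective, hS'card]
  have hspan2 : Submodule.span ℝ (a' '' ↑S') = Submodule.span ℝ (a '' ↑T₂) := by
    apply le_antisymm
    · rw [Submodule.span_le]
      rintro _ ⟨j, hj, rfl⟩
      have hj' : (j : Fin r) ∈ S' := by simpa using hj
      rw [(hal j).2]
      exact Submodule.smul_mem _ _ (Submodule.subset_span
        (Set.mem_image_of_mem _ (by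
          simp only [hT₂def, Finset.coe_image, Set.mem_image]
          exact ⟨j, by simpa using hj', rfl⟩)))
    · rw [Submodule.span_le]
      rintro _ ⟨i, hi, rfl⟩
      simp only [hT₂def, Finset.coe_image, Set.mem_image] at hi
      obtain ⟨j, hj, rfl⟩ := hi
      have : a (σa j) = (al j)⁻¹ • a' j := by
        rw [(hal j).2, smul_smul, inv_mul_cancel₀ (hal j).1, one_smul]
      rw [this]
      exact Submodule.smul_mem _ _ (Submodule.subset_span (Set.mem_image_of_mem _ hj))
  have hspanle : Submodule.span ℝ (a '' ↑S) ≤ Submodule.span ℝ (a '' ↑T₂) := by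
    rw [← hspan2, Submodule.span_le]
    rintro _ ⟨i, hi, rfl⟩
    exact haimem i (by simpa using hi)
  have hf1 : Module.finrank ℝ (Submodule.span ℝ (a '' ↑S)) = S.card :=
    finrank_span_finset_card (HA S (by omega))
  have hf2 : Module.finrank ℝ (Submodule.span ℝ (a '' ↑T₂)) = S.card := by
    rw [finrank_span_finset_card (HA T₂ (by omega)), hT₂card]
  have hspaneq : Submodule.span ℝ (a '' ↑S) = Submodule.span ℝ (a '' ↑T₂) :=
    Submodule.eq_of_le_of_finrank_le hspanle (by omega)
  -- T₂ ⊆ S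
  have hT₂S : T₂ ⊆ S := by
    intro i hiT₂
    by_contra hiS
    have hmem : a i ∈ Submodule.span ℝ (a '' ↑S) := by
      rw [hspaneq]
      exact Submodule.subset_span (Set.mem_image_of_mem _ (by simpa using hiT₂))
    have hT₃card : (insert i S).card = S.card + 1 := card_insert_of_notMem hiS
    have hle3 : Submodule.span ℝ (a '' ↑(insert i S)) ≤ Submodule.span ℝ (a '' ↑S) := by
      rw [Submodule.span_le]
      rintro _ ⟨i₂, hi₂, rfl⟩
      rcases Finset.mem_insert.1 (by simpa using hi₂) with rfl | hi₂S
      · exact hmem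
      · exact Submodule.subset_span (Set.mem_image_of_mem _ hi₂S)
    have hf3 : Module.finrank ℝ (Submodule.span ℝ (a '' ↑(insert i S))) = S.card + 1 := by
      rw [finrank_span_finset_card (HA (insert i S) (by omega)), hT₃card]
    have := Submodule.finrank_mono hle3
    omega
  have hT₂eq : T₂ = S := Finset.eq_of_subset_of_card_le hT₂S (by omega)
  -- contradiction
  have hj₀S' : j₀ ∈ S' := (hS'mem j₀).2 hi₀S
  have : i₁ ∈ T₂ := by
    rw [hT₂def, Finset.mem_image]
    exact ⟨j₀, hj₀S', rfl⟩
  rw [hT₂eq] at this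
  exact hi₁S this

theorem dotL_smul {n : ℕ} (γ : ℝ) (u y : Fin n → ℝ) : dotL (γ • u) y = γ * dotL u y := by
  simp only [dotL_apply, Finset.mul_sum, Pi.smul_apply, smul_eq_mul]
  exact Finset.sum_congr rfl (fun t _ => by ring)

theorem indep_scale {r κ : ℕ} {v : Fin r → ℝ} (hv : ∀ i, v i ≠ 0) {M : Fin r → Fin κ → ℝ}
    {S : Finset (Fin r)}
    (h : LinearIndependent ℝ (fun i : {i // i ∈ S} => M i.1)) :
    LinearIndependent ℝ (fun i : {i // i ∈ S} => (fun s => v i.1 * M i.1 s : Fin κ → ℝ)) := by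
  have h2 := h.units_smul (fun i : {i // i ∈ S} => Units.mk0 (v i.1) (hv i.1))
  convert h2 using 1
  ext i s
  simp [Units.smul_def]

theorem scalar_one {r κ₁ κ₂ κ₃ : ℕ}
    (a a' : Fin r → Fin κ₁ → ℝ) (b b' : Fin r → Fin κ₂ → ℝ) (c c' : Fin r → Fin κ₃ → ℝ)
    (k₁ k₂ k₃ : ℕ) (hk₁r : k₁ ≤ r) (hk₂r : k₂ ≤ r) (hk₃r : k₃ ≤ r) (hk₃2 : 2 ≤ k₃)
    (hsum : 2 * r + 2 ≤ k₁ + k₂ + k₃)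
    (HA : ∀ S : Finset (Fin r), S.card ≤ k₁ →
      LinearIndependent ℝ (fun i : {i // i ∈ S} => a i.1))
    (HB : ∀ S : Finset (Fin r), S.card ≤ k₂ →
      LinearIndependent ℝ (fun i : {i // i ∈ S} => b i.1))
    (HC : ∀ S : Finset (Fin r), S.card ≤ k₃ →
      LinearIndependent ℝ (fun i : {i // i ∈ S} => c i.1))
    (heq : ∀ s t u, ∑ i, a i s * b i t * c i u = ∑ i, a' i s * b' i t * c' i u)
    (σ : Equiv.Perm (Fin r)) (al be ga : Fin r → ℝ)
    (hal : ∀ j, al j ≠ 0 ∧ a' j = al j • a (σ j))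
    (hbe : ∀ j, be j ≠ 0 ∧ b' j = be j • b (σ j))
    (hga : ∀ j, ga j ≠ 0 ∧ c' j = ga j • c (σ j)) :
    ∀ j₀, al j₀ * be j₀ * ga j₀ = 1 := by
  intro j₀
  set i₀ := σ j₀ with hi₀def
  have hcard_er : k₃ - 1 ≤ (univ.erase i₀).card := by
    rw [card_erase_of_mem (mem_univ _), card_univ, Fintype.card_fin]
    omega
  obtain ⟨V, hVsub, hVcard⟩ := Finset.exists_subset_card_eq hcard_er
  have hi₀V : i₀ ∉ V := fun h => by
    have := hVsub h
    rw [mem_erase] at this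
    exact this.1 rfl
  set W := Submodule.span ℝ ((fun i => eqE κ₃ (c i)) '' ↑V) with hWdef
  obtain ⟨x, hx0, hxn⟩ := exists_generic_orthogonal (univ : Finset (Fin r)) W
    (fun i => eqE κ₃ (c i))
  set y := (eqE κ₃).symm x with hy
  set lam : Fin r → ℝ := fun i => ∑ u, c i u * y u with hlam
  set lam' : Fin r → ℝ := fun j => ∑ u, c' j u * y u with hlam'
  have hlami : ∀ i, lam i = ⟪eqE κ₃ (c i), x⟫ := fun i => (inner_eqE (c i) x).symm
  have hiff : ∀ i, lam i ≠ 0 ↔ eqE κ₃ (c i) ∉ W := by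
    intro i
    constructor
    · intro hnz hmem
      exact hnz (by rw [hlami]; exact hx0 _ hmem)
    · intro hnm
      rw [hlami]
      exact hxn i (mem_univ _) hnm
  set S := univ.filter (fun i => lam i ≠ 0) with hSdef
  have hcompl : S.card + (univ.filter (fun i => eqE κ₃ (c i) ∈ W)).card = r := by
    have h0 := Finset.card_filter_add_card_filter_not
      (s := (univ : Finset (Fin r))) (p := fun i => eqE κ₃ (c i) ∈ W)
    rw [card_univ, Fintype.card_fin] at h0
    have : S = univ.filter (fun i => ¬ (eqE κ₃ (c i) ∈ W)) :=
      filter_congr (fun i _ => by rw [hiff i])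
    rw [this]
    omega
  have hVin : V ⊆ univ.filter (fun i => eqE κ₃ (c i) ∈ W) := by
    intro i hi
    rw [mem_filter]
    exact ⟨mem_univ _, Submodule.subset_span (Set.mem_image_of_mem _ (by simpa using hi))⟩
  have hScard : S.card + k₃ ≤ r + 1 := by
    have := card_le_card hVin
    omega
  have hSk₂ : S.card ≤ k₂ := by omega
  have hi₀S : i₀ ∈ S := by
    rw [hSdef, mem_filter]
    refine ⟨mem_univ _, (hiff i₀).2 ?_⟩
    intro hmem
    have hWrank : Module.finrank ℝ W ≤ k₃ - 1 := by
      rw [hWdef]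
      calc Module.finrank ℝ (Submodule.span ℝ ((fun i => eqE κ₃ (c i)) '' ↑V))
          ≤ (V.image (fun i => eqE κ₃ (c i))).card := by
            rw [← Finset.coe_image]
            exact finrank_span_finset_le_card _
        _ ≤ V.card := Finset.card_image_le
        _ = k₃ - 1 := hVcard
    have hTcard : (insert i₀ V).card = k₃ := by
      rw [card_insert_of_notMem hi₀V, hVcard]
      omega
    have hTind := indep_E (v := c) (HC (insert i₀ V) (by omega))
    have hinW : ∀ i ∈ insert i₀ V, eqE κ₃ (c i) ∈ W := by
      intro i hi
      rcases mem_insert.1 hi with rfl | hiV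
      · exact hmem
      · exact Submodule.subset_span (Set.mem_image_of_mem _ (by simpa using hiV))
    have hck := card_le_finrank_of_indep (W := W) hTind hinW
    rw [hTcard] at hck
    omega
  have hlamnz : lam i₀ ≠ 0 := (mem_filter.1 hi₀S).2
  have hlameq : ∀ j, lam' j = ga j * lam (σ j) := by
    intro j
    rw [hlam', hlam]
    have hcj : ∀ u, c' j u = ga j * c (σ j) u := by
      intro u
      rw [(hga j).2]
      simp
    rw [Finset.mul_sum]
    exact Finset.sum_congr rfl (fun u _ => by rw [hcj u]; ring)
  -- the dual functional
  obtain ⟨f, hf⟩ := exists_dual_of_indep (HB S hSk₂) hi₀S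
  set y₂ : Fin κ₂ → ℝ := fun t => f (Pi.single t 1) with hy₂
  have hident := contract2 a a' b b' lam lam'
    (fun s t => contract3 a a' b b' c c' heq y s t) y₂
  have hLHS : ∑ i, (lam i * dotL (b i) y₂) • a i = lam i₀ • a i₀ := by
    rw [← Finset.sum_subset (subset_univ S) (fun i _ hiS => by
      have : lam i = 0 := by
        by_contra hnz
        exact hiS (by rw [hSdef, mem_filter]; exact ⟨mem_univ _, hnz⟩)
      rw [this, zero_mul, zero_smul])]
    rw [Finset.sum_eq_single_of_mem i₀ hi₀S (fun i hiS hne => by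
      rw [hy₂, dotL_single, hf i hiS, if_neg hne, mul_zero, zero_smul])]
    rw [hy₂, dotL_single, hf i₀ hi₀S, if_pos rfl, mul_one]
  have hRHS : ∑ j, (lam' j * dotL (b' j) y₂) • a' j
      = (ga j₀ * lam i₀ * (be j₀ * 1) * al j₀) • a i₀ := by
    have hterm : ∀ j ∈ (univ : Finset (Fin r)), j ≠ j₀ →
        (lam' j * dotL (b' j) y₂) • a' j = 0 := by
      intro j _ hne
      by_cases hjS : σ j ∈ S
      · rw [(hbe j).2, dotL_smul, hy₂, dotL_single, hf (σ j) hjS,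
          if_neg (fun hcon => hne (σ.injective (by rw [hcon, hi₀def])))]
        rw [mul_zero, mul_zero, zero_smul]
      · have : lam (σ j) = 0 := by
          by_contra hnz
          exact hjS (by rw [hSdef, mem_filter]; exact ⟨mem_univ _, hnz⟩)
        rw [hlameq j, this, mul_zero, zero_mul, zero_smul]
    rw [Finset.sum_eq_single_of_mem j₀ (mem_univ _) hterm]
    rw [hlameq j₀, (hbe j₀).2, (hal j₀).2, dotL_smul, hy₂, dotL_single, hf (σ j₀) hi₀S,
      if_pos rfl, ← hi₀def, smul_smul]
  have hanz : a i₀ ≠ 0 := by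
    have hind := HA {i₀} (by rw [card_singleton]; omega)
    exact hind.ne_zero ⟨i₀, mem_singleton_self i₀⟩
  have hkey : lam i₀ • a i₀ = (ga j₀ * lam i₀ * (be j₀ * 1) * al j₀) • a i₀ := by
    rw [← hLHS, hident, hRHS]
  have hscal : lam i₀ = ga j₀ * lam i₀ * (be j₀ * 1) * al j₀ := by
    by_contra hneq
    have : (lam i₀ - ga j₀ * lam i₀ * (be j₀ * 1) * al j₀) • a i₀ = 0 := by
      rw [sub_smul, hkey, sub_self]
    rcases smul_eq_zero.1 this with h0 | h0
    · exact hneq (by linarith [sub_eq_zero.1 h0])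
    · exact hanz h0
  have : lam i₀ * (al j₀ * be j₀ * ga j₀) = lam i₀ * 1 := by
    rw [mul_one]
    nth_rewrite 2 [hscal]
    ring
  have := mul_left_cancel₀ hlamnz this
  linarith

end KruskalAux

/-- Kruskal's theorem (statistical form): if `v, v'` have positive entries, the matrices
`M_j, M'_j` are row-stochastic, both triples satisfy the Kruskal condition
`rank_K M₁ + rank_K M₂ + rank_K M₃ ≥ 2r + 2`, and the associated 3-way tensors
`[v; M₁, M₂, M₃]` and `[v'; M'₁, M'₂, M'₃]` coincide, then the parameters agree up to a
simultaneous permutation of the rows. -/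
theorem kruskal_theorem
    (r κ₁ κ₂ κ₃ : ℕ)
    (v v' : Fin r → ℝ)
    (M₁ M₁' : Fin r → Fin κ₁ → ℝ)
    (M₂ M₂' : Fin r → Fin κ₂ → ℝ)
    (M₃ M₃' : Fin r → Fin κ₃ → ℝ)
    (hv : ∀ i, 0 < v i) (hv' : ∀ i, 0 < v' i)
    (hM₁ : ∀ i, (∀ s, 0 ≤ M₁ i s) ∧ ∑ s, M₁ i s = 1)
    (hM₂ : ∀ i, (∀ t, 0 ≤ M₂ i t) ∧ ∑ t, M₂ i t = 1)
    (hM₃ : ∀ i, (∀ u, 0 ≤ M₃ i u) ∧ ∑ u, M₃ i u = 1)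
    (hM₁' : ∀ i, (∀ s, 0 ≤ M₁' i s) ∧ ∑ s, M₁' i s = 1)
    (hM₂' : ∀ i, (∀ t, 0 ≤ M₂' i t) ∧ ∑ t, M₂' i t = 1)
    (hM₃' : ∀ i, (∀ u, 0 ≤ M₃' i u) ∧ ∑ u, M₃' i u = 1)
    (hK : kruskalRank M₁ + kruskalRank M₂ + kruskalRank M₃ ≥ 2 * r + 2)
    (hK' : kruskalRank M₁' + kruskalRank M₂' + kruskalRank M₃' ≥ 2 * r + 2)
    (heq : ∀ (s : Fin κ₁) (t : Fin κ₂) (u : Fin κ₃),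
      ∑ i, v i * M₁ i s * M₂ i t * M₃ i u
        = ∑ i, v' i * M₁' i s * M₂' i t * M₃' i u) :
    ∃ σ : Equiv.Perm (Fin r),
      (∀ i, v' i = v (σ i)) ∧
      (∀ i s, M₁' i s = M₁ (σ i) s) ∧
      (∀ i t, M₂' i t = M₂ (σ i) t) ∧
      (∀ i u, M₃' i u = M₃ (σ i) u) := by
  classical
  open KruskalAux in
  set k₁ := kruskalRank M₁ with hk₁def
  set k₂ := kruskalRank M₂ with hk₂def
  set k₃ := kruskalRank M₃ with hk₃def
  set k₁' := kruskalRank M₁' with hk₁'def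
  set k₂' := kruskalRank M₂' with hk₂'def
  set k₃' := kruskalRank M₃' with hk₃'def
  have hk₁r := kruskalRank_le M₁
  have hk₂r := kruskalRank_le M₂
  have hk₃r := kruskalRank_le M₃
  have hk₁'r := kruskalRank_le M₁'
  have hk₂'r := kruskalRank_le M₂'
  have hk₃'r := kruskalRank_le M₃'
  have h2k₁ : 2 ≤ k₁ := by omega
  have h2k₂ : 2 ≤ k₂ := by omega
  have h2k₃ : 2 ≤ k₃ := by omega
  have h2k₁' : 2 ≤ k₁' := by omega
  have h2k₂' : 2 ≤ k₂' := by omega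
  have h2k₃' : 2 ≤ k₃' := by omega
  have hKle : 2 * r + 2 ≤ k₁ + k₂ + k₃ := hK
  have hKle' : 2 * r + 2 ≤ k₁' + k₂' + k₃' := hK'
  set a : Fin r → Fin κ₁ → ℝ := fun i s => v i * M₁ i s with hadef
  set a' : Fin r → Fin κ₁ → ℝ := fun i s => v' i * M₁' i s with ha'def
  have hvnz : ∀ i, v i ≠ 0 := fun i => ne_of_gt (hv i)
  have hv'nz : ∀ i, v' i ≠ 0 := fun i => ne_of_gt (hv' i)
  have HA : ∀ S : Finset (Fin r), S.card ≤ k₁ →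
      LinearIndependent ℝ (fun i : {i // i ∈ S} => a i.1) := by
    intro S hS
    exact KruskalAux.indep_scale hvnz (kruskalRank_indep M₁ hS)
  have HA' : ∀ S : Finset (Fin r), S.card ≤ k₁' →
      LinearIndependent ℝ (fun i : {i // i ∈ S} => a' i.1) := by
    intro S hS
    exact KruskalAux.indep_scale hv'nz (kruskalRank_indep M₁' hS)
  have HB : ∀ S : Finset (Fin r), S.card ≤ k₂ →
      LinearIndependent ℝ (fun i : {i // i ∈ S} => M₂ i.1) :=
    fun S hS => kruskalRank_indep M₂ hS
  have HB' : ∀ S : Finset (Fin r), S.card ≤ k₂' →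
      LinearIndependent ℝ (fun i : {i // i ∈ S} => M₂' i.1) :=
    fun S hS => kruskalRank_indep M₂' hS
  have HC : ∀ S : Finset (Fin r), S.card ≤ k₃ →
      LinearIndependent ℝ (fun i : {i // i ∈ S} => M₃ i.1) :=
    fun S hS => kruskalRank_indep M₃ hS
  have HC' : ∀ S : Finset (Fin r), S.card ≤ k₃' →
      LinearIndependent ℝ (fun i : {i // i ∈ S} => M₃' i.1) :=
    fun S hS => kruskalRank_indep M₃' hS
  have heq' : ∀ s t u, ∑ i, a i s * M₂ i t * M₃ i u = ∑ i, a' i s * M₂' i t * M₃' i u :=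
    fun s t u => heq s t u
  have heq₁ : ∀ t u s, ∑ i, M₂ i t * M₃ i u * a i s = ∑ i, M₂' i t * M₃' i u * a' i s := by
    intro t u s
    calc ∑ i, M₂ i t * M₃ i u * a i s = ∑ i, a i s * M₂ i t * M₃ i u :=
          Finset.sum_congr rfl (fun i _ => by ring)
      _ = ∑ i, a' i s * M₂' i t * M₃' i u := heq' s t u
      _ = ∑ i, M₂' i t * M₃' i u * a' i s := Finset.sum_congr rfl (fun i _ => by ring)
  have heq₂ : ∀ s u t, ∑ i, a i s * M₃ i u * M₂ i t = ∑ i, a' i s * M₃' i u * M₂' i t := by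
    intro s u t
    calc ∑ i, a i s * M₃ i u * M₂ i t = ∑ i, a i s * M₂ i t * M₃ i u :=
          Finset.sum_congr rfl (fun i _ => by ring)
      _ = ∑ i, a' i s * M₂' i t * M₃' i u := heq' s t u
      _ = ∑ i, a' i s * M₃' i u * M₂' i t := Finset.sum_congr rfl (fun i _ => by ring)
  have heqba : ∀ t s u, ∑ i, M₂ i t * a i s * M₃ i u = ∑ i, M₂' i t * a' i s * M₃' i u := by
    intro t s u
    calc ∑ i, M₂ i t * a i s * M₃ i u = ∑ i, a i s * M₂ i t * M₃ i u :=
          Finset.sum_congr rfl (fun i _ => by ring)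
      _ = ∑ i, a' i s * M₂' i t * M₃' i u := heq' s t u
      _ = ∑ i, M₂' i t * a' i s * M₃' i u := Finset.sum_congr rfl (fun i _ => by ring)
  -- the three matchings
  obtain ⟨σ₃, hσ₃⟩ := KruskalAux.matching_mode a a' M₂ M₂' M₃ M₃' k₁ k₂ k₃ k₁' k₂' k₃'
    hk₁r hk₂r hk₁'r hk₂'r h2k₃ hk₃r h2k₃' hk₃'r hKle hKle' HA HB HC HA' HB' HC' heq'
  obtain ⟨σ₁, hσ₁⟩ := KruskalAux.matching_mode M₂ M₂' M₃ M₃' a a' k₂ k₃ k₁ k₂' k₃' k₁'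
    hk₂r hk₃r hk₂'r hk₃'r h2k₁ hk₁r h2k₁' hk₁'r (by omega) (by omega)
    HB HC HA HB' HC' HA' heq₁
  obtain ⟨σ₂, hσ₂⟩ := KruskalAux.matching_mode a a' M₃ M₃' M₂ M₂' k₁ k₃ k₂ k₁' k₃' k₂'
    hk₁r hk₃r hk₁'r hk₃'r h2k₂ hk₂r h2k₂' hk₂'r (by omega) (by omega)
    HA HC HB HA' HC' HB' heq₂
  choose ga hganz hgaeq using hσ₃
  choose al halnz haleq using hσ₁
  choose be hbenz hbeeq using hσ₂
  -- the permutations agree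
  have hσ₁₃ : ∀ j, σ₁ j = σ₃ j :=
    KruskalAux.perm_eq a a' M₂ M₂' M₃ M₃' k₁ k₂ k₃ hk₁r hk₂r hk₃r h2k₃ hKle HA HB HC heq'
      σ₁ σ₃ al ga (fun j => ⟨halnz j, haleq j⟩) (fun j => ⟨hganz j, hgaeq j⟩)
  have hσ₂₃ : ∀ j, σ₂ j = σ₃ j :=
    KruskalAux.perm_eq M₂ M₂' a a' M₃ M₃' k₂ k₁ k₃ hk₂r hk₁r hk₃r h2k₃ (by omega) HB HA HC heqba
      σ₂ σ₃ be ga (fun j => ⟨hbenz j, hbeeq j⟩) (fun j => ⟨hganz j, hgaeq j⟩)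
  have haleq3 : ∀ j, a' j = al j • a (σ₃ j) := fun j => by rw [← hσ₁₃ j]; exact haleq j
  have hbeeq3 : ∀ j, M₂' j = be j • M₂ (σ₃ j) := fun j => by rw [← hσ₂₃ j]; exact hbeeq j
  -- scalars multiply to one
  have hone := KruskalAux.scalar_one a a' M₂ M₂' M₃ M₃' k₁ k₂ k₃ hk₁r hk₂r hk₃r h2k₃ hKle
    HA HB HC heq' σ₃ al be ga (fun j => ⟨halnz j, haleq3 j⟩) (fun j => ⟨hbenz j, hbeeq3 j⟩)
    (fun j => ⟨hganz j, hgaeq j⟩)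
  -- row sums force the scalars to be 1
  have hbe1 : ∀ j, be j = 1 := by
    intro j
    have h2 : ∑ t, M₂' j t = be j * ∑ t, M₂ (σ₃ j) t := by
      rw [Finset.mul_sum]
      exact Finset.sum_congr rfl (fun t _ => by rw [hbeeq3 j]; simp)
    rw [(hM₂' j).2, (hM₂ (σ₃ j)).2, mul_one] at h2
    linarith
  have hga1 : ∀ j, ga j = 1 := by
    intro j
    have h2 : ∑ u, M₃' j u = ga j * ∑ u, M₃ (σ₃ j) u := by
      rw [Finset.mul_sum]
      exact Finset.sum_congr rfl (fun u _ => by rw [hgaeq j]; simp)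
    rw [(hM₃' j).2, (hM₃ (σ₃ j)).2, mul_one] at h2
    linarith
  have hal1 : ∀ j, al j = 1 := by
    intro j
    have := hone j
    rw [hbe1 j, hga1 j, mul_one, mul_one] at this
    exact this
  have hveq : ∀ j, v' j = v (σ₃ j) := by
    intro j
    have h2 : ∑ s, a' j s = al j * ∑ s, a (σ₃ j) s := by
      rw [Finset.mul_sum]
      exact Finset.sum_congr rfl (fun s _ => by rw [haleq3 j]; simp)
    have hL : ∑ s, a' j s = v' j := by
      rw [ha'def]
      rw [← Finset.mul_sum, (hM₁' j).2, mul_one]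
    have hR : ∑ s, a (σ₃ j) s = v (σ₃ j) := by
      rw [hadef]
      rw [← Finset.mul_sum, (hM₁ (σ₃ j)).2, mul_one]
    rw [hL, hR, hal1 j, one_mul] at h2
    exact h2
  refine ⟨σ₃, hveq, ?_, ?_, ?_⟩
  · intro j s
    have h1 : a' j s = al j * a (σ₃ j) s := by rw [haleq3 j]; simp
    rw [hal1 j, one_mul, hadef, ha'def] at h1
    simp only at h1
    rw [hveq j] at h1
    exact mul_left_cancel₀ (by rw [← hveq j]; exact hv'nz j) h1
  · intro j t
    have h1 : M₂' j t = be j * M₂ (σ₃ j) t := by rw [hbeeq3 j]; simp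
    rw [hbe1 j, one_mul] at h1
    exact h1
  · intro j u
    have h1 : M₃' j u = ga j * M₃ (σ₃ j) u := by rw [hgaeq j]; simp
    rw [hga1 j, one_mul] at h1
    exact h1
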